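/- arXiv:2604.08099 — 3 statements merged into one kernel-verified Lean document; each statement's English description precedes it below -/
import Mathlib

section
/- Let b₁, b₂ ∈ ℝ³ be linearly independent, set b̄ := (b₁ × b₂)/|b₁ × b₂| and S := b₁b₁ᵀ + b₂b₂ᵀ, and let X be a real 3×3 matrix satisfying the four Moore–Penrose conditions for S. Let a ∈ ℝ³ be nonzero with â := a/|a|, let R, R̂ be real 3×3 orthogonal matrices (RᵀR = R̂ᵀR̂ = I), and set R̃ := R̂·Rᵀ. Then Σᵢ₌₁² (X·bᵢ) × (R̂·ââᵀ·R̂ᵀ·(I − R̃)·bᵢ) = ((I − b̄b̄ᵀ)·(R̂â − Râ)) × (R̂â). -/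
open Matrix

/-- Euclidean norm of a vector in `ℝ³`. -/
noncomputable def enorm3 (v : Fin 3 → ℝ) : ℝ := Real.sqrt (v ⬝ᵥ v)

lemma vmv_mulVec (u v w : Fin 3 → ℝ) : vecMulVec u v *ᵥ w = (v ⬝ᵥ w) • u := by
  funext i
  simp [vecMulVec_apply, mulVec, dotProduct, Finset.mul_sum, mul_comm, mul_assoc, mul_left_comm]

lemma dot_transpose (A : Matrix (Fin 3) (Fin 3) ℝ) (u v : Fin 3 → ℝ) :
    u ⬝ᵥ (Aᵀ *ᵥ v) = (A *ᵥ u) ⬝ᵥ v := by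
  rw [mulVec_transpose, dotProduct_comm, ← dotProduct_mulVec, dotProduct_comm]

lemma vmv_transpose (u v : Fin 3 → ℝ) : (vecMulVec u v)ᵀ = vecMulVec v u := by
  ext i j; simp [vecMulVec_apply, transpose_apply, mul_comm]

lemma cross_smul_left (k : ℝ) (u v : Fin 3 → ℝ) : (k • u) ⨯₃ v = k • (u ⨯₃ v) := by
  rw [show k • u = (k : ℝ) • u from rfl, LinearMap.map_smul]; rfl

lemma cross_smul_right (k : ℝ) (u v : Fin 3 → ℝ) : u ⨯₃ (k • v) = k • (u ⨯₃ v) :=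
  (crossProduct u).map_smul k v

lemma cross_add_left (u v w : Fin 3 → ℝ) : (u + v) ⨯₃ w = u ⨯₃ w + v ⨯₃ w := by
  rw [LinearMap.map_add]; rfl

theorem stmt13 (b₁ b₂ : Fin 3 → ℝ) (hli : LinearIndependent ℝ ![b₁, b₂])
    (bbar : Fin 3 → ℝ) (hbar : bbar = (enorm3 (b₁ ⨯₃ b₂))⁻¹ • (b₁ ⨯₃ b₂))
    (S X : Matrix (Fin 3) (Fin 3) ℝ)
    (hS : S = vecMulVec b₁ b₁ + vecMulVec b₂ b₂)
    (h1 : S * X * S = S) (h2 : X * S * X = X)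
    (h3 : (S * X)ᵀ = S * X) (h4 : (X * S)ᵀ = X * S)
    (a : Fin 3 → ℝ) (ha : a ≠ 0)
    (ahat : Fin 3 → ℝ) (hahat : ahat = (enorm3 a)⁻¹ • a)
    (R Rhat : Matrix (Fin 3) (Fin 3) ℝ) (hR : Rᵀ * R = 1) (hRh : Rhatᵀ * Rhat = 1)
    (Rt : Matrix (Fin 3) (Fin 3) ℝ) (hRt : Rt = Rhat * Rᵀ) :
    (X *ᵥ b₁) ⨯₃ ((Rhat * vecMulVec ahat ahat * Rhatᵀ * (1 - Rt)) *ᵥ b₁)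
      + (X *ᵥ b₂) ⨯₃ ((Rhat * vecMulVec ahat ahat * Rhatᵀ * (1 - Rt)) *ᵥ b₂)
      = (((1 : Matrix (Fin 3) (Fin 3) ℝ) - vecMulVec bbar bbar) *ᵥ (Rhat *ᵥ ahat - R *ᵥ ahat))
          ⨯₃ (Rhat *ᵥ ahat) := by
  -- Basic facts about the cross product
  have hcne : b₁ ⨯₃ b₂ ≠ 0 := crossProduct_ne_zero_iff_linearIndependent.mpr hli
  have hccnn : (0:ℝ) ≤ (b₁ ⨯₃ b₂) ⬝ᵥ (b₁ ⨯₃ b₂) :=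
    Finset.sum_nonneg fun i _ => mul_self_nonneg _
  have hcc : (b₁ ⨯₃ b₂) ⬝ᵥ (b₁ ⨯₃ b₂) ≠ 0 := by
    intro h; exact hcne (dotProduct_self_eq_zero.mp h)
  have hccpos : (0:ℝ) < (b₁ ⨯₃ b₂) ⬝ᵥ (b₁ ⨯₃ b₂) := lt_of_le_of_ne hccnn (Ne.symm hcc)
  have hn : enorm3 (b₁ ⨯₃ b₂) ≠ 0 := by
    simp only [enorm3]
    exact ne_of_gt (Real.sqrt_pos.mpr hccpos)
  have hnn : enorm3 (b₁ ⨯₃ b₂) * enorm3 (b₁ ⨯₃ b₂) = (b₁ ⨯₃ b₂) ⬝ᵥ (b₁ ⨯₃ b₂) :=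
    Real.mul_self_sqrt hccnn
  -- bbar facts
  have hbb : bbar ⬝ᵥ bbar = 1 := by
    rw [hbar, smul_dotProduct, dotProduct_smul, smul_eq_mul, smul_eq_mul, ← hnn]
    field_simp
  have hb1bar : b₁ ⬝ᵥ bbar = 0 := by
    rw [hbar, dotProduct_smul, dot_self_cross, smul_zero]
  have hb2bar : b₂ ⬝ᵥ bbar = 0 := by
    rw [hbar, dotProduct_smul, dot_cross_self, smul_zero]
  have hSbar : S *ᵥ bbar = 0 := by
    rw [hS, add_mulVec, vmv_mulVec, vmv_mulVec, hb1bar, hb2bar, zero_smul, zero_smul, add_zero]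
  -- S is symmetric
  have hSsym : Sᵀ = S := by
    rw [hS, transpose_add, vmv_transpose, vmv_transpose]
  -- X*S*S = S
  have hXSeq : X * S = S * Xᵀ := by
    have := h4
    rw [transpose_mul, hSsym] at this
    exact this.symm
  have h1t : S * Xᵀ * S = S := by
    have := congrArg Matrix.transpose h1
    rwa [transpose_mul, transpose_mul, hSsym, ← Matrix.mul_assoc] at this
  have hXSS : X * S * S = S := by rw [hXSeq]; exact h1t
  -- (X*S) fixes b₁ and b₂
  have hfix : ∀ v : Fin 3 → ℝ, (X * S) *ᵥ (S *ᵥ v) = S *ᵥ v := by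
    intro v
    rw [mulVec_mulVec, Matrix.mul_assoc, ← Matrix.mul_assoc, hXSS]
  have hgram : b₁ ⬝ᵥ b₁ * (b₂ ⬝ᵥ b₂) - b₁ ⬝ᵥ b₂ * (b₂ ⬝ᵥ b₁) = (b₁ ⨯₃ b₂) ⬝ᵥ (b₁ ⨯₃ b₂) := by
    rw [cross_dot_cross]
  have hSv1 : S *ᵥ ((b₂ ⬝ᵥ b₂) • b₁ - (b₁ ⬝ᵥ b₂) • b₂)
      = ((b₁ ⨯₃ b₂) ⬝ᵥ (b₁ ⨯₃ b₂)) • b₁ := by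
    rw [hS, add_mulVec, vmv_mulVec, vmv_mulVec, ← hgram]
    rw [dotProduct_sub, dotProduct_sub, dotProduct_smul, dotProduct_smul,
      dotProduct_smul, dotProduct_smul]
    have c12 : b₂ ⬝ᵥ b₁ = b₁ ⬝ᵥ b₂ := dotProduct_comm _ _
    rw [c12]
    match_scalars <;> simp only [smul_eq_mul] <;> ring
  have hSv2 : S *ᵥ ((b₁ ⬝ᵥ b₁) • b₂ - (b₁ ⬝ᵥ b₂) • b₁)
      = ((b₁ ⨯₃ b₂) ⬝ᵥ (b₁ ⨯₃ b₂)) • b₂ := by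
    rw [hS, add_mulVec, vmv_mulVec, vmv_mulVec, ← hgram]
    rw [dotProduct_sub, dotProduct_sub, dotProduct_smul, dotProduct_smul,
      dotProduct_smul, dotProduct_smul]
    have c12 : b₂ ⬝ᵥ b₁ = b₁ ⬝ᵥ b₂ := dotProduct_comm _ _
    rw [c12]
    match_scalars <;> simp only [smul_eq_mul] <;> ring
  have hfix1 : (X * S) *ᵥ b₁ = b₁ := by
    have h := hfix ((b₂ ⬝ᵥ b₂) • b₁ - (b₁ ⬝ᵥ b₂) • b₂)
    rw [hSv1, mulVec_smul] at h
    exact smul_right_injective (Fin 3 → ℝ) hcc h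
  have hfix2 : (X * S) *ᵥ b₂ = b₂ := by
    have h := hfix ((b₁ ⬝ᵥ b₁) • b₂ - (b₁ ⬝ᵥ b₂) • b₁)
    rw [hSv2, mulVec_smul] at h
    exact smul_right_injective (Fin 3 → ℝ) hcc h
  have hfixbar : (X * S) *ᵥ bbar = 0 := by
    rw [← mulVec_mulVec, hSbar, mulVec_zero]
  -- the projector Q
  set Q : Matrix (Fin 3) (Fin 3) ℝ := 1 - vecMulVec bbar bbar with hQ
  have hQ1 : Q *ᵥ b₁ = b₁ := by
    rw [hQ, sub_mulVec, one_mulVec, vmv_mulVec, dotProduct_comm, hb1bar, zero_smul, sub_zero]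
  have hQ2 : Q *ᵥ b₂ = b₂ := by
    rw [hQ, sub_mulVec, one_mulVec, vmv_mulVec, dotProduct_comm, hb2bar, zero_smul, sub_zero]
  have hQbar : Q *ᵥ bbar = 0 := by
    rw [hQ, sub_mulVec, one_mulVec, vmv_mulVec, hbb, one_smul, sub_self]
  -- X * S = Q
  set M : Matrix (Fin 3) (Fin 3) ℝ := Matrix.of ![b₁, b₂, bbar] with hM
  have hdetM : M.det ≠ 0 := by
    have : M.det = bbar ⬝ᵥ (b₁ ⨯₃ b₂) := by
      rw [show M.det = b₁ ⬝ᵥ (b₂ ⨯₃ bbar) from (triple_product_eq_det _ _ _).symm,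
        triple_product_permutation, triple_product_permutation]
    rw [this, hbar, smul_dotProduct, smul_eq_mul]
    exact mul_ne_zero (inv_ne_zero hn) hcc
  have hcols : (Q - X * S) * Mᵀ = 0 := by
    ext i j
    have he : ((Q - X * S) * Mᵀ) i j = ((Q - X * S) *ᵥ (M j)) i := by
      simp [mul_apply, mulVec, dotProduct, transpose_apply]
    rw [he]
    have e0 : M 0 = b₁ := rfl
    have e1 : M 1 = b₂ := rfl
    have e2 : M 2 = bbar := rfl
    fin_cases j <;>
      simp [sub_mulVec, e0, e1, e2, hQ1, hQ2, hQbar, hfix1, hfix2, hfixbar]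
  have hu : IsUnit (Mᵀ).det := by
    rw [det_transpose]; exact isUnit_iff_ne_zero.mpr hdetM
  have hkey : X * S = Q := by
    have h0 : Q - X * S = 0 := by
      calc Q - X * S = (Q - X * S) * (Mᵀ * (Mᵀ)⁻¹) := by
            rw [mul_nonsing_inv _ hu, Matrix.mul_one]
        _ = ((Q - X * S) * Mᵀ) * (Mᵀ)⁻¹ := by rw [Matrix.mul_assoc]
        _ = 0 := by rw [hcols, Matrix.zero_mul]
    exact (sub_eq_zero.mp h0).symm
  -- main computation
  have hmv : ∀ w : Fin 3 → ℝ,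
      (Rhat * vecMulVec ahat ahat * Rhatᵀ * (1 - Rt)) *ᵥ w
        = ((Rhat *ᵥ ahat - R *ᵥ ahat) ⬝ᵥ w) • (Rhat *ᵥ ahat) := by
    intro w
    rw [← mulVec_mulVec, ← mulVec_mulVec, ← mulVec_mulVec, vmv_mulVec, mulVec_smul]
    congr 1
    rw [dot_transpose, sub_mulVec, one_mulVec, dotProduct_sub, hRt, ← mulVec_mulVec]
    have hmid : (Rhat *ᵥ ahat) ⬝ᵥ (Rhat *ᵥ (Rᵀ *ᵥ w)) = (R *ᵥ ahat) ⬝ᵥ w := by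
      have h5 : (Rhat *ᵥ ahat) ⬝ᵥ (Rhat *ᵥ (Rᵀ *ᵥ w))
          = (Rhatᵀ *ᵥ (Rhat *ᵥ ahat)) ⬝ᵥ (Rᵀ *ᵥ w) := by
        conv_lhs => rw [show Rhat = Rhatᵀᵀ from (transpose_transpose _).symm]
        rw [dot_transpose, transpose_transpose]
      rw [h5, mulVec_mulVec, hRh, one_mulVec, dot_transpose]
    rw [hmid, sub_dotProduct]
  rw [hmv b₁, hmv b₂, cross_smul_right, cross_smul_right, ← cross_smul_left, ← cross_smul_left,
    ← cross_add_left]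
  congr 2
  set d := Rhat *ᵥ ahat - R *ᵥ ahat with hd
  have hSd : S *ᵥ d = (d ⬝ᵥ b₁) • b₁ + (d ⬝ᵥ b₂) • b₂ := by
    rw [hS, add_mulVec, vmv_mulVec, vmv_mulVec, dotProduct_comm b₁ d, dotProduct_comm b₂ d]
  calc (d ⬝ᵥ b₁) • (X *ᵥ b₁) + (d ⬝ᵥ b₂) • (X *ᵥ b₂)
      = X *ᵥ ((d ⬝ᵥ b₁) • b₁ + (d ⬝ᵥ b₂) • b₂) := by
        rw [mulVec_add, mulVec_smul, mulVec_smul]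
    _ = X *ᵥ (S *ᵥ d) := by rw [hSd]
    _ = (X * S) *ᵥ d := mulVec_mulVec ..
    _ = Q *ᵥ d := by rw [hkey]
end

section
/- Let R̃ be a real 3×3 orthogonal matrix (R̃ᵀR̃ = I), let Π be a symmetric real 3×3 matrix, and let b̂ ∈ ℝ³. Then trace([ b̂ × (R̃·Π·(R̃ᵀb̂ − b̂)) ]× · R̃) = (R̃ᵀb̂ − b̂)ᵀ·Π·((R̃ᵀ)²·b̂ − b̂). -/
open Matrix

/-- The skew-symmetric matrix `[x]ₓ` associated with the cross product: `[x]ₓ ⬝ y = x × y`. -/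
def skew (x : Fin 3 → ℝ) : Matrix (Fin 3) (Fin 3) ℝ :=
  !![0, -x 2, x 1; x 2, 0, -x 0; -x 1, x 0, 0]

lemma skew_cross (a w : Fin 3 → ℝ) :
    skew (a ⨯₃ w) = vecMulVec w a - vecMulVec a w := by
  ext i j
  fin_cases i <;> fin_cases j <;>
    simp [skew, crossProduct, vecMulVec] <;> ring

lemma trace_vecMulVec_mul (x y : Fin 3 → ℝ) (M : Matrix (Fin 3) (Fin 3) ℝ) :
    Matrix.trace (vecMulVec x y * M) = y ⬝ᵥ (M *ᵥ x) := by
  simp [Matrix.trace, Matrix.mul_apply, vecMulVec, dotProduct, mulVec, Finset.mul_sum, diag]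
  rw [Finset.sum_comm]
  congr 1; ext i; congr 1; ext j; ring

theorem stmt17 (Rt : Matrix (Fin 3) (Fin 3) ℝ) (hRt : Rtᵀ * Rt = 1)
    (Pr : Matrix (Fin 3) (Fin 3) ℝ) (hPr : Prᵀ = Pr)
    (bhat : Fin 3 → ℝ) :
    Matrix.trace (skew (bhat ⨯₃ ((Rt * Pr) *ᵥ (Rtᵀ *ᵥ bhat - bhat))) * Rt)
      = (Rtᵀ *ᵥ bhat - bhat) ⬝ᵥ (Pr *ᵥ ((Rtᵀ * Rtᵀ) *ᵥ bhat - bhat)) := by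
  set e := Rtᵀ *ᵥ bhat - bhat with he
  rw [skew_cross, Matrix.sub_mul, Matrix.trace_sub, trace_vecMulVec_mul,
    trace_vecMulVec_mul]
  have h1 : bhat ⬝ᵥ (Rt *ᵥ ((Rt * Pr) *ᵥ e))
      = e ⬝ᵥ ((Pr * (Rtᵀ * Rtᵀ)) *ᵥ bhat) := by
    rw [mulVec_mulVec, dotProduct_mulVec, ← mulVec_transpose,
      show (Rt * (Rt * Pr))ᵀ = Pr * (Rtᵀ * Rtᵀ) by
        simp [transpose_mul, hPr, Matrix.mul_assoc],
      dotProduct_comm]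
  have h2 : ((Rt * Pr) *ᵥ e) ⬝ᵥ (Rt *ᵥ bhat) = e ⬝ᵥ (Pr *ᵥ bhat) := by
    rw [dotProduct_comm, dotProduct_mulVec, vecMul_mulVec, ← Matrix.mul_assoc,
      hRt, Matrix.one_mul, ← mulVec_transpose, hPr, dotProduct_comm]
  rw [h1, h2, mulVec_sub, dotProduct_sub, ← mulVec_mulVec]
end

section
/- Let θ* ∈ (0, π/2) and ε ∈ [0, cos(θ*/2)·cos(θ*)). Let R̃ ∈ SO(3) satisfy trace(R̃) ≥ 1 + 2cos(θ*), and let v, w ∈ ℝ³ be unit vectors such that the operator norm of vvᵀ − wwᵀ (with respect to the Euclidean norm) is at most ε. Then (R̃ᵀv − v)ᵀ·(I − wwᵀ)·((R̃ᵀ)²v − v) ≥ (1 − vᵀR̃²v)·(cos(θ*) − ε/cos(θ*/2)); in particular this quantity is nonnegative. -/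
open Matrix Real

/-- Euclidean norm of a vector in `ℝ³`. -/
noncomputable def enorm' (v : Fin 3 → ℝ) : ℝ := Real.sqrt (v ⬝ᵥ v)

/-- Operator norm of a `3 × 3` real matrix with respect to the Euclidean norm on `ℝ³`. -/
noncomputable def opNorm (A : Matrix (Fin 3) (Fin 3) ℝ) : ℝ :=
  ‖(Matrix.toEuclideanLin A).toContinuousLinearMap‖

lemma adj3 (A : Matrix (Fin 3) (Fin 3) ℝ) :
    adjugate A = A * A - trace A • A + trace (adjugate A) • 1 := by
  ext i j
  fin_cases i <;> fin_cases j <;>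
    simp [adjugate_fin_three, Matrix.mul_apply, Matrix.trace_fin_three, Fin.sum_univ_three,
      Matrix.one_apply] <;> ring

lemma enorm_eq (x : Fin 3 → ℝ) : ‖(WithLp.equiv 2 (Fin 3 → ℝ)).symm x‖ = enorm' x := by
  rw [EuclideanSpace.norm_eq]
  unfold enorm'
  congr 1
  simp [dotProduct, sq]

lemma dot_opNorm (A : Matrix (Fin 3) (Fin 3) ℝ) (x y : Fin 3 → ℝ) :
    |x ⬝ᵥ (A *ᵥ y)| ≤ opNorm A * (enorm' x * enorm' y) := by
  set X := (WithLp.equiv 2 (Fin 3 → ℝ)).symm x with hX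
  set Y := (WithLp.equiv 2 (Fin 3 → ℝ)).symm y with hY
  have h1 : x ⬝ᵥ (A *ᵥ y) = inner ℝ X ((Matrix.toEuclideanLin A).toContinuousLinearMap Y) := by
    rw [LinearMap.coe_toContinuousLinearMap']
    rw [Matrix.toEuclideanLin_apply]
    simp [PiLp.inner_apply, dotProduct, hX, hY]
    exact Finset.sum_congr rfl (fun i _ => mul_comm _ _)
  rw [h1]
  calc |inner ℝ X ((Matrix.toEuclideanLin A).toContinuousLinearMap Y)|
      ≤ ‖X‖ * ‖(Matrix.toEuclideanLin A).toContinuousLinearMap Y‖ := abs_real_inner_le_norm _ _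
    _ ≤ ‖X‖ * (opNorm A * ‖Y‖) := by
        gcongr
        exact ((Matrix.toEuclideanLin A).toContinuousLinearMap).le_opNorm Y
    _ = opNorm A * (enorm' x * enorm' y) := by rw [← enorm_eq x, ← enorm_eq y]; ring

lemma dd (A B : Matrix (Fin 3) (Fin 3) ℝ) (x y : Fin 3 → ℝ) :
    (A *ᵥ x) ⬝ᵥ (B *ᵥ y) = x ⬝ᵥ ((Aᵀ * B) *ᵥ y) := by
  rw [← Matrix.mulVec_mulVec]
  conv_rhs => rw [Matrix.dotProduct_mulVec, Matrix.vecMul_transpose]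

lemma vmv (x y z : Fin 3 → ℝ) : (vecMulVec x y) *ᵥ z = (y ⬝ᵥ z) • x := by
  ext i
  simp [vecMulVec_apply, mulVec, dotProduct, Finset.sum_mul, Finset.mul_sum]
  ring_nf

lemma dsym (C : Matrix (Fin 3) (Fin 3) ℝ) (x : Fin 3 → ℝ) :
    x ⬝ᵥ (Cᵀ *ᵥ x) = x ⬝ᵥ (C *ᵥ x) := by
  rw [Matrix.dotProduct_mulVec, Matrix.vecMul_transpose, dotProduct_comm]

lemma cs_dot (x y : Fin 3 → ℝ) : (x ⬝ᵥ y) ^ 2 ≤ (x ⬝ᵥ x) * (y ⬝ᵥ y) := by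
  have := Finset.sum_mul_sq_le_sq_mul_sq Finset.univ x y
  simpa [dotProduct, sq] using this

set_option maxHeartbeats 1000000 in
theorem stmt18 (θs ε : ℝ) (hθ : θs ∈ Set.Ioo 0 (π / 2))
    (hε : ε ∈ Set.Ico 0 (Real.cos (θs / 2) * Real.cos θs))
    (Rt : Matrix (Fin 3) (Fin 3) ℝ) (hRt : Rtᵀ * Rt = 1) (hdet : Rt.det = 1)
    (htr : Matrix.trace Rt ≥ 1 + 2 * Real.cos θs)
    (v w : Fin 3 → ℝ) (hv : enorm' v = 1) (hw : enorm' w = 1)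
    (hvw : opNorm (vecMulVec v v - vecMulVec w w) ≤ ε) :
    (Rtᵀ *ᵥ v - v) ⬝ᵥ (((1 : Matrix (Fin 3) (Fin 3) ℝ) - vecMulVec w w) *ᵥ ((Rtᵀ * Rtᵀ) *ᵥ v - v))
        ≥ (1 - v ⬝ᵥ ((Rt * Rt) *ᵥ v)) * (Real.cos θs - ε / Real.cos (θs / 2))
      ∧ 0 ≤ (Rtᵀ *ᵥ v - v) ⬝ᵥ
          (((1 : Matrix (Fin 3) (Fin 3) ℝ) - vecMulVec w w) *ᵥ ((Rtᵀ * Rtᵀ) *ᵥ v - v)) := by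
  obtain ⟨hθ0, hθ2⟩ := hθ
  obtain ⟨hε0, hε1⟩ := hε
  set R := Rt with hRdef
  set t : ℝ := trace R with ht
  set ct : ℝ := Real.cos θs with hct
  set ch : ℝ := Real.cos (θs / 2) with hch
  -- basic trig facts
  have hctpos : 0 < ct := Real.cos_pos_of_mem_Ioo ⟨by linarith [Real.pi_pos], hθ2⟩
  have hchpos : 0 < ch := Real.cos_pos_of_mem_Ioo
    ⟨by linarith [Real.pi_pos], by linarith [Real.pi_pos]⟩
  have hchsq : ch ^ 2 = 1 / 2 + ct / 2 := by rw [hch, Real.cos_sq]; ring_nf; rw [hct]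
  -- orthogonality facts
  have hR' : R * Rᵀ = 1 := mul_eq_one_comm.mp hRt
  have hadj : adjugate R = Rᵀ := by
    have h1 : R * adjugate R = 1 := by rw [Matrix.mul_adjugate, hdet, one_smul]
    calc adjugate R = (Rᵀ * R) * adjugate R := by rw [hRt, one_mul]
      _ = Rᵀ * (R * adjugate R) := by rw [mul_assoc]
      _ = Rᵀ := by rw [h1, mul_one]
  have key : Rᵀ = R * R - t • R + t • 1 := by
    have := adj3 R
    rw [hadj, Matrix.trace_transpose] at this
    exact this
  have keyT : R = Rᵀ * Rᵀ - t • Rᵀ + t • 1 := by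
    have := congrArg Matrix.transpose key
    simpa [Matrix.transpose_mul, Matrix.trace_transpose] using this
  have h2 : R * R = Rᵀ + t • R - t • 1 := by rw [key]; abel
  have h2T : Rᵀ * Rᵀ = R + t • Rᵀ - t • 1 := by
    calc Rᵀ * Rᵀ = (Rᵀ * Rᵀ - t • Rᵀ + t • 1) + t • Rᵀ - t • 1 := by abel
      _ = R + t • Rᵀ - t • 1 := by rw [← keyT]
  -- trace bound
  have htle : t ≤ 3 := by
    have hdiag : ∀ i : Fin 3, R i i ≤ 1 := by
      intro i
      have h1 : (Rᵀ * R) i i = (1 : Matrix (Fin 3) (Fin 3) ℝ) i i := by rw [hRt]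
      have h2 : (∑ k : Fin 3, R k i * R k i) = 1 := by
        simpa [Matrix.mul_apply, Matrix.one_apply] using h1
      have h3 : R i i * R i i ≤ ∑ k : Fin 3, R k i * R k i :=
        Finset.single_le_sum (fun k _ => mul_self_nonneg (R k i)) (Finset.mem_univ i)
      by_contra hx
      push_neg at hx
      have h4 : 1 * 1 < R i i * R i i :=
        mul_lt_mul' (le_of_lt hx) hx (by norm_num) (by linarith)
      linarith
    have heq : t = R 0 0 + R 1 1 + R 2 2 := by rw [ht, Matrix.trace_fin_three]
    linarith [hdiag 0, hdiag 1, hdiag 2]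
  -- scalar quantities
  have hvv : v ⬝ᵥ v = 1 := by
    have := hv
    unfold enorm' at this
    exact Real.sqrt_eq_one.mp this
  set c : ℝ := v ⬝ᵥ (R *ᵥ v) with hc
  set d : ℝ := v ⬝ᵥ ((R * R) *ᵥ v) with hd
  -- f1 : v ⬝ (Rᵀ v) = c
  have f1 : v ⬝ᵥ (Rᵀ *ᵥ v) = c := by
    rw [Matrix.dotProduct_mulVec, Matrix.vecMul_transpose, dotProduct_comm]
  have f2 : v ⬝ᵥ ((Rᵀ * Rᵀ) *ᵥ v) = d := by
    rw [show Rᵀ * Rᵀ = (R * R)ᵀ by rw [Matrix.transpose_mul], dsym]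
  have f3 : (Rᵀ *ᵥ v) ⬝ᵥ (Rᵀ *ᵥ v) = 1 := by
    rw [dd, Matrix.transpose_transpose, hR', Matrix.one_mulVec, hvv]
  have f4 : ((Rᵀ * Rᵀ) *ᵥ v) ⬝ᵥ ((Rᵀ * Rᵀ) *ᵥ v) = 1 := by
    rw [dd]
    have : (Rᵀ * Rᵀ)ᵀ * (Rᵀ * Rᵀ) = 1 := by
      rw [Matrix.transpose_mul, Matrix.transpose_transpose]
      calc R * R * (Rᵀ * Rᵀ) = R * (R * Rᵀ) * Rᵀ := by simp only [mul_assoc]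
        _ = 1 := by rw [hR', mul_one, hR']
    rw [this, Matrix.one_mulVec, hvv]
  have f5 : (Rᵀ *ᵥ v) ⬝ᵥ ((Rᵀ * Rᵀ) *ᵥ v) = c := by
    rw [dd, Matrix.transpose_transpose]
    have : R * (Rᵀ * Rᵀ) = Rᵀ := by rw [← mul_assoc, hR', one_mul]
    rw [this, f1]
  -- d in terms of c
  have hdc : d = (t + 1) * c - t := by
    rw [hd, h2]
    simp only [Matrix.sub_mulVec, Matrix.add_mulVec, Matrix.smul_mulVec,
      Matrix.one_mulVec, dotProduct_sub, dotProduct_add, dotProduct_smul,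
      smul_eq_mul]
    rw [f1, hvv]
    ring
  -- c bounds
  have hcle : c ≤ 1 := by
    have := cs_dot v (R *ᵥ v)
    rw [hvv] at this
    have h3 : (R *ᵥ v) ⬝ᵥ (R *ᵥ v) = 1 := by rw [dd, hRt, Matrix.one_mulVec, hvv]
    rw [h3] at this
    by_contra hx
    push_neg at hx
    have h4 : 1 * 1 < c * c := mul_lt_mul' (le_of_lt hx) hx (by norm_num) (by linarith)
    nlinarith [h4, this]
  have hcge : 2 * c ≥ t - 1 := by
    set M : Matrix (Fin 3) (Fin 3) ℝ := R + Rᵀ - (t - 1) • 1 with hM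
    have hMT : Mᵀ = M := by
      simp [hM, Matrix.transpose_add, Matrix.transpose_smul, add_comm]
    have hMsq : M * M = (3 - t) • M := by
      rw [hM]
      simp only [sub_mul, mul_sub, add_mul, mul_add, smul_mul_assoc, Matrix.mul_smul, one_mul,
        mul_one, smul_smul, hRt, hR', h2, h2T, smul_add, smul_sub]
      module
    set q : ℝ := v ⬝ᵥ (M *ᵥ v) with hq
    have hqval : q = 2 * c - (t - 1) := by
      rw [hq, hM]
      simp only [Matrix.sub_mulVec, Matrix.add_mulVec, Matrix.smul_mulVec,
        Matrix.one_mulVec, dotProduct_sub, dotProduct_add, dotProduct_smul,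
        smul_eq_mul]
      rw [f1, hvv]
      ring
    have hqsq : q ^ 2 ≤ (3 - t) * q := by
      have hcs := cs_dot v (M *ᵥ v)
      rw [hvv, one_mul] at hcs
      have : (M *ᵥ v) ⬝ᵥ (M *ᵥ v) = (3 - t) * q := by
        rw [dd, hMT, hMsq, Matrix.smul_mulVec, dotProduct_smul, smul_eq_mul, hq]
      rw [this] at hcs
      exact hcs
    have hq0 : 0 ≤ q := by
      by_contra hqq
      push_neg at hqq
      have hl : (3 - t) * q ≤ 0 :=
        mul_nonpos_of_nonneg_of_nonpos (by linarith) (le_of_lt hqq)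
      have hne : q ≠ 0 := ne_of_lt hqq
      have hp : 0 < q ^ 2 := lt_of_le_of_ne (sq_nonneg q) (Ne.symm (pow_ne_zero 2 hne))
      linarith
    linarith [hqval ▸ hq0]
  -- norms of a and b
  set a : Fin 3 → ℝ := Rᵀ *ᵥ v - v with ha
  set b : Fin 3 → ℝ := (Rᵀ * Rᵀ) *ᵥ v - v with hb
  have haa : a ⬝ᵥ a = 2 - 2 * c := by
    rw [ha]
    simp only [sub_dotProduct, dotProduct_sub]
    rw [f3, f1, hvv, dotProduct_comm (Rᵀ *ᵥ v) v, f1]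
    ring
  have hbb : b ⬝ᵥ b = 2 - 2 * d := by
    rw [hb]
    simp only [sub_dotProduct, dotProduct_sub]
    rw [f4, f2, hvv, dotProduct_comm ((Rᵀ * Rᵀ) *ᵥ v) v, f2]
    ring
  have hab : a ⬝ᵥ b = 1 - d := by
    rw [ha, hb]
    simp only [sub_dotProduct, dotProduct_sub]
    rw [f5, hvv, f2, dotProduct_comm (Rᵀ *ᵥ v) v, f1]
    ring
  have hav : a ⬝ᵥ v = c - 1 := by
    rw [ha]
    simp only [sub_dotProduct]
    rw [dotProduct_comm (Rᵀ *ᵥ v) v, f1, hvv]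
  have hvb : v ⬝ᵥ b = d - 1 := by
    rw [hb]
    simp only [dotProduct_sub]
    rw [f2, hvv]
  -- decompose the main expression
  set E : ℝ := a ⬝ᵥ (((1 : Matrix (Fin 3) (Fin 3) ℝ) - vecMulVec w w) *ᵥ b) with hE
  set err : ℝ := a ⬝ᵥ ((vecMulVec v v - vecMulVec w w) *ᵥ b) with herr
  have hEeq : E = (1 - d) - (c - 1) * (d - 1) + err := by
    rw [hE, herr]
    simp only [Matrix.sub_mulVec, Matrix.one_mulVec, dotProduct_sub]
    rw [hab, vmv v v b, dotProduct_smul, smul_eq_mul, hav, hvb]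
    ring
  -- bound on err
  have henorma : enorm' a = Real.sqrt (2 - 2 * c) := by rw [enorm', haa]
  have henormb : enorm' b = Real.sqrt (2 - 2 * d) := by rw [enorm', hbb]
  have herrbound : |err| ≤ ε * (enorm' a * enorm' b) := by
    have h1 := dot_opNorm (vecMulVec v v - vecMulVec w w) a b
    rw [← herr] at h1
    have h2 : opNorm (vecMulVec v v - vecMulVec w w) * (enorm' a * enorm' b)
        ≤ ε * (enorm' a * enorm' b) := by
      apply mul_le_mul_of_nonneg_right hvw
      rw [henorma, henormb]
      positivity
    linarith
  -- sqrt computations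
  set s : ℝ := Real.sqrt (t + 1) with hs
  have htpos : (0:ℝ) < t + 1 := by linarith [hctpos, htr]
  have hssq : s * s = t + 1 := Real.mul_self_sqrt (le_of_lt htpos)
  have hsge : 2 * ch ≤ s := by
    rw [hs]
    rw [show (2:ℝ) * ch = Real.sqrt ((2 * ch)^2) from
      (Real.sqrt_sq (by positivity)).symm]
    apply Real.sqrt_le_sqrt
    have hx : (2 * ch) ^ 2 = 4 * ch ^ 2 := by ring
    linarith
  have hprod : enorm' a * enorm' b = 2 * (1 - c) * s := by
    rw [henorma, henormb, ← Real.sqrt_mul (by linarith : (0:ℝ) ≤ 2 - 2 * c)]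
    have : (2 - 2 * c) * (2 - 2 * d) = (2 * (1 - c))^2 * (t + 1) := by
      rw [hdc]; ring
    rw [this, Real.sqrt_mul (sq_nonneg _), Real.sqrt_sq (by linarith : (0:ℝ) ≤ 2 * (1 - c)), hs]
  -- final bounds
  have h1md : 1 - d = (t + 1) * (1 - c) := by rw [hdc]; ring
  have h1mdnn : 0 ≤ 1 - d := by
    rw [h1md]
    exact mul_nonneg (by linarith) (by linarith)
  have hcct : ct ≤ c := by linarith
  have hεh : ε / ch < ct := (div_lt_iff₀ hchpos).mpr (by linarith [hε1])
  have herrge : err ≥ -(ε * (2 * (1 - c) * s)) := by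
    rw [← hprod]
    have := abs_le.mp herrbound
    linarith [this.1]
  -- ε * 2(1-c)s ≤ (1-d) * (ε/h)
  have hclaimA : ε * (2 * (1 - c) * s) ≤ (1 - d) * (ε / ch) := by
    rw [h1md]
    have hsle : s ≤ (t + 1) / (2 * ch) := by
      rw [le_div_iff₀ (by positivity)]
      have hsnn : (0:ℝ) ≤ s := Real.sqrt_nonneg _
      calc s * (2 * ch) ≤ s * s := mul_le_mul_of_nonneg_left hsge hsnn
        _ = t + 1 := hssq
    calc ε * (2 * (1 - c) * s) ≤ ε * (2 * (1 - c) * ((t + 1) / (2 * ch))) := by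
          apply mul_le_mul_of_nonneg_left _ hε0
          apply mul_le_mul_of_nonneg_left hsle
          linarith
      _ = (t + 1) * (1 - c) * (ε / ch) := by field_simp
  have hgoal1 : E ≥ (1 - d) * (ct - ε / ch) := by
    rw [hEeq]
    have hB : (1 - d) - (c - 1) * (d - 1) = (1 - d) * c := by ring
    have hcm : (1 - d) * ct ≤ (1 - d) * c := mul_le_mul_of_nonneg_left hcct h1mdnn
    have hexpand : (1 - d) * (ct - ε / ch) = (1 - d) * ct - (1 - d) * (ε / ch) := by ring
    linarith [herrge, hclaimA, hB, hcm, hexpand]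
  constructor
  · rw [hE] at hgoal1
    rw [hd] at hgoal1
    exact hgoal1
  · have : (0:ℝ) ≤ (1 - d) * (ct - ε / ch) := by
      apply mul_nonneg h1mdnn
      linarith [hεh]
    have hgoal1' := hgoal1
    rw [hE] at hgoal1'
    linarith [hgoal1']
end
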